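/- Consider the Interaction 6 guiding system F : ℝ² → ℝ², F(Σ,Ω) = ((3/2)·Σ·(−γ(Σ²+Ω²−1)+2Σ²+Ω²−2), (3/2)·Ω·(−γΣ² + γ + Ω²·(−γ+m+1) + 2Σ² − 1)), with parameters γ and m such that (1−γ)/(1+m−γ) > 0. Set Ω₉ := √((1−γ)/(1+m−γ)). Then (0,Ω₉) is an equilibrium point of F, and the Jacobian matrix of F at (0,Ω₉) is the diagonal matrix with diagonal entries 3(γ + (γ−2)m − 1)/(2(1+m−γ)) and 3 − 3γ. -/

import Mathlib

/-- Interaction 6 guiding system: when `(1−γ)/(1+m−γ) > 0`, the point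
`P₉ = (0, √((1−γ)/(1+m−γ)))` is an equilibrium and the Jacobian there is
`diag(3(γ + (γ−2)m − 1)/(2(1+m−γ)), 3 − 3γ)`. -/
theorem interaction6_P9_equilibrium
    (γ m : ℝ) (hpos : 0 < (1 - γ) / (1 + m - γ))
    (Ω₉ : ℝ) (hΩ₉ : Ω₉ = Real.sqrt ((1 - γ) / (1 + m - γ)))
    (F : ℝ × ℝ → ℝ × ℝ)
    (hF : ∀ p : ℝ × ℝ, F p =
      ((3 / 2) * p.1 * (-γ * (p.1 ^ 2 + p.2 ^ 2 - 1) + 2 * p.1 ^ 2 + p.2 ^ 2 - 2),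
       (3 / 2) * p.2 * (-γ * p.1 ^ 2 + γ + p.2 ^ 2 * (-γ + m + 1)
         + 2 * p.1 ^ 2 - 1))) :
    F (0, Ω₉) = (0, 0) ∧
    HasFDerivAt F
      (((3 * (γ + (γ - 2) * m - 1) / (2 * (1 + m - γ))) •
          ContinuousLinearMap.id ℝ ℝ).prodMap
        ((3 - 3 * γ) • ContinuousLinearMap.id ℝ ℝ)) (0, Ω₉) := by
  have hden : (1 + m - γ) ≠ 0 := by
    intro h; rw [h, div_zero] at hpos; exact lt_irrefl 0 hpos
  have hΩsq : Ω₉ ^ 2 * (1 + m - γ) = 1 - γ := by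
    rw [hΩ₉, sq, Real.mul_self_sqrt hpos.le, div_mul_cancel₀ _ hden]
  have hFeq : F = fun p : ℝ × ℝ =>
      ((3 / 2) * p.1 * (-γ * (p.1 ^ 2 + p.2 ^ 2 - 1) + 2 * p.1 ^ 2 + p.2 ^ 2 - 2),
       (3 / 2) * p.2 * (-γ * p.1 ^ 2 + γ + p.2 ^ 2 * (-γ + m + 1)
         + 2 * p.1 ^ 2 - 1)) := funext hF
  constructor
  · rw [hF]
    simp only
    refine Prod.ext ?_ ?_ <;> simp only
    · ring
    · linear_combination (3/2) * Ω₉ * hΩsq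
  · have hx : HasFDerivAt (fun p : ℝ × ℝ => p.1) (ContinuousLinearMap.fst ℝ ℝ ℝ) (0, Ω₉) :=
      hasFDerivAt_fst
    have hy : HasFDerivAt (fun p : ℝ × ℝ => p.2) (ContinuousLinearMap.snd ℝ ℝ ℝ) (0, Ω₉) :=
      hasFDerivAt_snd
    have hx2 : HasFDerivAt (fun p : ℝ × ℝ => p.1 ^ 2)
        ((0 : ℝ) • ContinuousLinearMap.fst ℝ ℝ ℝ + (0 : ℝ) • ContinuousLinearMap.fst ℝ ℝ ℝ)
        (0, Ω₉) := by
      have h := hx.mul hx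
      rw [show (fun p : ℝ × ℝ => p.1 ^ 2) = fun p => p.1 * p.1 from funext fun p => sq _]
      exact h
    have hy2 : HasFDerivAt (fun p : ℝ × ℝ => p.2 ^ 2)
        (Ω₉ • ContinuousLinearMap.snd ℝ ℝ ℝ + Ω₉ • ContinuousLinearMap.snd ℝ ℝ ℝ)
        (0, Ω₉) := by
      have h := hy.mul hy
      rw [show (fun p : ℝ × ℝ => p.2 ^ 2) = fun p => p.2 * p.2 from funext fun p => sq _]
      exact h
    have hg1 := (((hx2.add hy2).sub_const 1).const_mul (-γ)).add
      (((hx2.const_mul 2).add hy2).sub_const 2)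
    have hf1 := (hx.const_mul (3/2 : ℝ)).mul hg1
    have hg2 := ((hx2.const_mul (-γ)).add_const γ).add
      (((hy2.mul_const (-γ + m + 1)).add (hx2.const_mul 2)).sub_const 1)
    have hf2 := (hy.const_mul (3/2 : ℝ)).mul hg2
    have H := HasFDerivAt.prodMk hf1 hf2
    rw [hFeq]
    convert H using 2
    · rfl
    · rfl
    · rfl
    · simp only [Pi.mul_apply, Pi.add_apply]
      rw [Prod.mk.injEq]; constructor <;> ring
    apply ContinuousLinearMap.ext
    intro v
    rw [Prod.ext_iff]
    constructor <;>
      simp only [ContinuousLinearMap.coe_prodMap', Prod.map_apply,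
        ContinuousLinearMap.prod_apply, ContinuousLinearMap.add_apply,
        ContinuousLinearMap.smul_apply, ContinuousLinearMap.coe_fst',
        ContinuousLinearMap.coe_snd', ContinuousLinearMap.id_apply, smul_eq_mul,
        nsmul_eq_mul, Nat.cast_ofNat, Prod.map_fst, Prod.map_snd, Pi.add_apply, Pi.mul_apply]
    · field_simp
      ring_nf
      linear_combination (v.1 * (γ - 1)) * hΩsq
    · ring_nf
      linear_combination (-(9 / 2) * v.2) * hΩsq
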